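/- L^p perturbation bound for posterior densities under perturbation of the observable (Lemma 4.5): Assume ρ satisfies (N.1)–(N.3), and let L, L' : X → ℝ^d be Borel measurable with ‖L‖_{L²(μ_prior)} < ∞ and ‖L'‖_{L²(μ_prior)} < ∞; let Z(y) := ∫_X ρ(y − L(ū)) dμ_prior(ū) and Z'(y) := ∫_X ρ(y − L'(ū)) dμ_prior(ū). There exists a constant C > 0, depending only on ρ, such that for every p ∈ [1,∞] and every y ∈ ℝ^d: ‖ ρ(y − L'(·))/Z'(y) − ρ(y − L(·))/Z(y) ‖_{L^p(μ_prior)} ≤ C ‖ |L'(·) − L(·)|_Γ ‖_{L^p(μ_prior)} · exp( 2|y|_Γ² + ‖L'‖²_{L²(μ_prior)} + ‖L‖²_{L²(μ_prior)} ). -/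

import Mathlib

open MeasureTheory
open scoped BigOperators ENNReal Matrix

noncomputable section

/-- The Γ-weighted norm `|y|_Γ = sqrt ⟨y, Γ⁻¹ y⟩` on `ℝ^d`. -/
def gammaNorm {d : ℕ} (Γ : Matrix (Fin d) (Fin d) ℝ) (y : Fin d → ℝ) : ℝ :=
  Real.sqrt (y ⬝ᵥ (Γ⁻¹).mulVec y)

/-- A noise density satisfying (N.1)–(N.3). -/
structure IsNoiseDensity {d : ℕ} (Γ : Matrix (Fin d) (Fin d) ℝ) (ρ : (Fin d → ℝ) → ℝ)
    (Lρ Cb Ct : ℝ) : Prop where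
  Lρ_pos : 0 < Lρ
  Cb_pos : 0 < Cb
  Ct_pos : 0 < Ct
  pos : ∀ y, 0 < ρ y
  lip : ∀ y y', |ρ y - ρ y'| ≤ Lρ * gammaNorm Γ (y - y')
  bdd : ∀ y, ρ y ≤ Cb
  tail : ∀ y, Ct⁻¹ * Real.exp (-(1 / 2) * (gammaNorm Γ y) ^ 2) ≤ ρ y

/-- Wasserstein-1 distance in Kantorovich–Rubinstein dual form. -/
def W1 {X : Type*} [NormedAddCommGroup X] [MeasurableSpace X] (μ ν : Measure X) : ℝ :=
  sSup {r : ℝ | ∃ Φ : X → ℝ, LipschitzWith 1 Φ ∧ Φ 0 = 0 ∧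
    r = (∫ u, Φ u ∂μ) - ∫ u, Φ u ∂ν}

/-- Normalization constant `Z(y) = ∫ ρ(y − L(ū)) dμ_prior(ū)`. -/
def bayesZ {X : Type*} [MeasurableSpace X] {d : ℕ} (μp : Measure X)
    (ρ : (Fin d → ℝ) → ℝ) (L : X → Fin d → ℝ) (y : Fin d → ℝ) : ℝ :=
  ∫ u, ρ (y - L u) ∂μp

/-- The Bayesian posterior `μ^y = Z(y)⁻¹ ρ(y − L(·)) · μ_prior`. -/
def bayesPosterior {X : Type*} [MeasurableSpace X] {d : ℕ} (μp : Measure X)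
    (ρ : (Fin d → ℝ) → ℝ) (L : X → Fin d → ℝ) (y : Fin d → ℝ) : Measure X :=
  μp.withDensity fun u => ENNReal.ofReal (ρ (y - L u) / bayesZ μp ρ L y)

/-! ### Auxiliary lemmas about `gammaNorm` -/

lemma gammaNorm_nonneg {d : ℕ} (Γ : Matrix (Fin d) (Fin d) ℝ) (y : Fin d → ℝ) :
    0 ≤ gammaNorm Γ y := Real.sqrt_nonneg _

lemma gammaNorm_zero {d : ℕ} (Γ : Matrix (Fin d) (Fin d) ℝ) :
    gammaNorm Γ 0 = 0 := by
  simp [gammaNorm]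

lemma gammaNorm_triangle {d : ℕ} {Γ : Matrix (Fin d) (Fin d) ℝ} (hΓ : Γ.PosDef)
    (x y : Fin d → ℝ) : gammaNorm Γ (x + y) ≤ gammaNorm Γ x + gammaNorm Γ y := by
  have hA : (Γ⁻¹).PosDef := hΓ.inv
  let SG : SeminormedAddCommGroup (Fin d → ℝ) :=
    @NormedAddCommGroup.toSeminormedAddCommGroup _ (Matrix.toNormedAddCommGroup _ hA)
  have key : ∀ z : Fin d → ℝ, gammaNorm Γ z =
      @norm (Fin d → ℝ) (@SeminormedAddCommGroup.toNorm _ SG) z := fun z => by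
    rw [@norm_eq_sqrt_real_inner (Fin d → ℝ) SG (Matrix.toInnerProductSpace _ hA.posSemidef) z]
    simp [gammaNorm, inner, dotProduct_comm]
  rw [key, key, key]
  exact @norm_add_le _ (@SeminormedAddCommGroup.toSeminormedAddGroup _ SG) x y

lemma gammaNorm_neg {d : ℕ} (Γ : Matrix (Fin d) (Fin d) ℝ) (x : Fin d → ℝ) :
    gammaNorm Γ (-x) = gammaNorm Γ x := by
  simp [gammaNorm, Matrix.mulVec_neg, neg_dotProduct, dotProduct_neg]

lemma gammaNorm_sub_rev {d : ℕ} (Γ : Matrix (Fin d) (Fin d) ℝ) (x y : Fin d → ℝ) :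
    gammaNorm Γ (x - y) = gammaNorm Γ (y - x) := by
  rw [← gammaNorm_neg Γ (x - y), neg_sub]

lemma gammaNorm_sub_le {d : ℕ} {Γ : Matrix (Fin d) (Fin d) ℝ} (hΓ : Γ.PosDef)
    (x y : Fin d → ℝ) : gammaNorm Γ (x - y) ≤ gammaNorm Γ x + gammaNorm Γ y := by
  rw [sub_eq_add_neg]
  exact (gammaNorm_triangle hΓ x (-y)).trans (by rw [gammaNorm_neg])

lemma gammaNorm_sub_sq_le {d : ℕ} {Γ : Matrix (Fin d) (Fin d) ℝ} (hΓ : Γ.PosDef)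
    (x y : Fin d → ℝ) :
    gammaNorm Γ (x - y) ^ 2 ≤ 2 * gammaNorm Γ x ^ 2 + 2 * gammaNorm Γ y ^ 2 := by
  have h := gammaNorm_sub_le hΓ x y
  have h0 := gammaNorm_nonneg Γ (x - y)
  have h1 := gammaNorm_nonneg Γ x
  have h2 := gammaNorm_nonneg Γ y
  nlinarith [sq_nonneg (gammaNorm Γ x - gammaNorm Γ y)]

lemma gammaNorm_continuous {d : ℕ} (Γ : Matrix (Fin d) (Fin d) ℝ) :
    Continuous fun z : Fin d → ℝ => gammaNorm Γ z := by
  apply Real.continuous_sqrt.comp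
  simp only [dotProduct, Matrix.mulVec]
  fun_prop

lemma noise_continuous {d : ℕ} {Γ : Matrix (Fin d) (Fin d) ℝ} {ρ : (Fin d → ℝ) → ℝ}
    {Lρ Cb Ct : ℝ} (hρ : IsNoiseDensity Γ ρ Lρ Cb Ct) : Continuous ρ := by
  rw [continuous_iff_continuousAt]
  intro x
  have hc : Continuous fun y : Fin d → ℝ => Lρ * gammaNorm Γ (y - x) :=
    continuous_const.mul ((gammaNorm_continuous Γ).comp (continuous_id.sub continuous_const))
  have h0 : Filter.Tendsto (fun y : Fin d → ℝ => Lρ * gammaNorm Γ (y - x)) (nhds x) (nhds 0) := by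
    have := hc.tendsto x
    simpa [gammaNorm_zero] using this
  have h1 : Filter.Tendsto (fun y => ρ y - ρ x) (nhds x) (nhds 0) :=
    squeeze_zero_norm (fun y => by simpa [Real.norm_eq_abs] using hρ.lip y x) h0
  have h2 := h1.add_const (ρ x)
  unfold ContinuousAt
  simpa using h2

/-- **Lemma 4.5: `L^p` perturbation bound for the posterior density under a
perturbation of the observable, with a constant depending only on the noise
density `ρ` (valid for every `p ∈ [1,∞]`).** -/
theorem posterior_density_perturbation_Lp
    {X : Type*} [NormedAddCommGroup X] [NormedSpace ℝ X] [CompleteSpace X]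
    [TopologicalSpace.SeparableSpace X] [MeasurableSpace X] [BorelSpace X]
    {d : ℕ}
    (Γ : Matrix (Fin d) (Fin d) ℝ) (hΓ : Γ.PosDef)
    (ρ : (Fin d → ℝ) → ℝ) (Lρ Cb Ct : ℝ) (hρ : IsNoiseDensity Γ ρ Lρ Cb Ct) :
    ∃ C > 0, ∀ μp : Measure X, IsProbabilityMeasure μp →
      ∀ L L' : X → Fin d → ℝ, Measurable L → Measurable L' →
        Integrable (fun u => (gammaNorm Γ (L u)) ^ 2) μp →
        Integrable (fun u => (gammaNorm Γ (L' u)) ^ 2) μp →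
      ∀ p : ℝ≥0∞, 1 ≤ p → ∀ y : Fin d → ℝ,
        eLpNorm
            (fun u => ρ (y - L' u) / bayesZ μp ρ L' y - ρ (y - L u) / bayesZ μp ρ L y)
            p μp
          ≤ ENNReal.ofReal
              (C * Real.exp (2 * (gammaNorm Γ y) ^ 2
                + (∫ v, (gammaNorm Γ (L' v)) ^ 2 ∂μp)
                + ∫ v, (gammaNorm Γ (L v)) ^ 2 ∂μp)) *
            eLpNorm (fun u => gammaNorm Γ (L' u - L u)) p μp := by
  have hLρ := hρ.Lρ_pos
  have hCb := hρ.Cb_pos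
  have hCt := hρ.Ct_pos
  have hρc : Continuous ρ := noise_continuous hρ
  refine ⟨Lρ * Ct + Cb * Lρ * Ct ^ 2, by positivity, ?_⟩
  intro μp hμp L L' hL hL' hIL hIL' p hp y
  -- basic abbreviations
  set nL2 : ℝ := ∫ v, (gammaNorm Γ (L v)) ^ 2 ∂μp with hnL2
  set nL2' : ℝ := ∫ v, (gammaNorm Γ (L' v)) ^ 2 ∂μp with hnL2'
  have hnL2_nonneg : 0 ≤ nL2 := integral_nonneg fun v => by positivity
  have hnL2'_nonneg : 0 ≤ nL2' := integral_nonneg fun v => by positivity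
  have hgy : 0 ≤ gammaNorm Γ y ^ 2 := by positivity
  -- integrability of the likelihood, and the Jensen lower bound on Z, for any observable
  have main : ∀ M : X → Fin d → ℝ, Measurable M →
      Integrable (fun u => (gammaNorm Γ (M u)) ^ 2) μp →
      Integrable (fun u => ρ (y - M u)) μp ∧
      Ct⁻¹ * Real.exp (-(gammaNorm Γ y ^ 2 + ∫ v, (gammaNorm Γ (M v)) ^ 2 ∂μp))
        ≤ bayesZ μp ρ M y := by
    intro M hM hIM
    have hmg : Measurable fun u => gammaNorm Γ (y - M u) :=
      (gammaNorm_continuous Γ).measurable.comp (measurable_const.sub hM)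
    have hmρ : Measurable fun u => ρ (y - M u) :=
      hρc.measurable.comp (measurable_const.sub hM)
    have hint : Integrable (fun u => ρ (y - M u)) μp := by
      refine Integrable.mono' (integrable_const Cb) hmρ.aestronglyMeasurable
        (Filter.Eventually.of_forall fun u => ?_)
      rw [Real.norm_eq_abs, abs_of_pos (hρ.pos _)]
      exact hρ.bdd _
    refine ⟨hint, ?_⟩
    set h : X → ℝ := fun u => -(1 / 2) * gammaNorm Γ (y - M u) ^ 2 with hh
    have hbd : ∀ u, gammaNorm Γ (y - M u) ^ 2
        ≤ 2 * gammaNorm Γ y ^ 2 + 2 * gammaNorm Γ (M u) ^ 2 := fun u =>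
      gammaNorm_sub_sq_le hΓ y (M u)
    have hhm : Measurable h := ((hmg.pow_const 2).const_mul (-(1 / 2)))
    have hInt_h : Integrable h μp := by
      refine Integrable.mono' ((integrable_const (gammaNorm Γ y ^ 2)).add hIM)
        hhm.aestronglyMeasurable (Filter.Eventually.of_forall fun u => ?_)
      have h0 := gammaNorm_nonneg Γ (y - M u)
      have h1 := gammaNorm_nonneg Γ (M u)
      simp only [Real.norm_eq_abs, hh, Pi.add_apply]
      rw [abs_of_nonpos (by nlinarith)]
      nlinarith [hbd u]
    have hInt_eh : Integrable (fun u => Real.exp (h u)) μp := by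
      refine Integrable.mono' (integrable_const 1) (hhm.exp).aestronglyMeasurable
        (Filter.Eventually.of_forall fun u => ?_)
      rw [Real.norm_eq_abs, abs_of_pos (Real.exp_pos _)]
      apply Real.exp_le_one_iff.2
      have h0 := gammaNorm_nonneg Γ (y - M u)
      rw [hh]; nlinarith
    have jensen : Real.exp (∫ u, h u ∂μp) ≤ ∫ u, Real.exp (h u) ∂μp := by
      have := convexOn_exp.map_integral_le (μ := μp) (f := h)
        Real.continuous_exp.continuousOn isClosed_univ
        (Filter.Eventually.of_forall fun _ => Set.mem_univ _) hInt_h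
        (by exact hInt_eh)
      exact this
    have hintlb : -(gammaNorm Γ y ^ 2 + ∫ v, (gammaNorm Γ (M v)) ^ 2 ∂μp)
        ≤ ∫ u, h u ∂μp := by
      have hIlow : Integrable (fun u => -(gammaNorm Γ y ^ 2 + gammaNorm Γ (M u) ^ 2)) μp :=
        ((integrable_const (gammaNorm Γ y ^ 2)).add hIM).neg
      have hmono : ∫ u, -(gammaNorm Γ y ^ 2 + gammaNorm Γ (M u) ^ 2) ∂μp ≤ ∫ u, h u ∂μp := by
        refine integral_mono hIlow hInt_h fun u => ?_
        have := hbd u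
        have h0 := gammaNorm_nonneg Γ (y - M u)
        simp only [hh]; nlinarith
      calc -(gammaNorm Γ y ^ 2 + ∫ v, (gammaNorm Γ (M v)) ^ 2 ∂μp)
          = ∫ u, -(gammaNorm Γ y ^ 2 + gammaNorm Γ (M u) ^ 2) ∂μp := by
            rw [integral_neg, integral_add (integrable_const _) hIM, integral_const]
            simp
        _ ≤ ∫ u, h u ∂μp := hmono
    have htail : Ct⁻¹ * ∫ u, Real.exp (h u) ∂μp ≤ bayesZ μp ρ M y := by
      rw [bayesZ, ← integral_const_mul]
      refine integral_mono (hInt_eh.const_mul _) hint fun u => ?_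
      have := hρ.tail (y - M u)
      rw [hh]
      convert this using 3
    calc Ct⁻¹ * Real.exp (-(gammaNorm Γ y ^ 2 + ∫ v, (gammaNorm Γ (M v)) ^ 2 ∂μp))
        ≤ Ct⁻¹ * Real.exp (∫ u, h u ∂μp) := by
          apply mul_le_mul_of_nonneg_left (Real.exp_le_exp.2 hintlb) (by positivity)
      _ ≤ Ct⁻¹ * ∫ u, Real.exp (h u) ∂μp := by
          apply mul_le_mul_of_nonneg_left jensen (by positivity)
      _ ≤ bayesZ μp ρ M y := htail
  obtain ⟨hintρ, hZlb⟩ := main L hL hIL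
  obtain ⟨hintρ', hZlb'⟩ := main L' hL' hIL'
  rw [← hnL2] at hZlb
  rw [← hnL2'] at hZlb'
  set Z : ℝ := bayesZ μp ρ L y with hZdef
  set Z' : ℝ := bayesZ μp ρ L' y with hZ'def
  have hZpos : 0 < Z := lt_of_lt_of_le (by positivity) hZlb
  have hZ'pos : 0 < Z' := lt_of_lt_of_le (by positivity) hZlb'
  -- inverse bounds
  set c : ℝ := Ct * Real.exp (gammaNorm Γ y ^ 2 + nL2) with hcdef
  set c' : ℝ := Ct * Real.exp (gammaNorm Γ y ^ 2 + nL2') with hc'def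
  have hcpos : 0 < c := by positivity
  have hc'pos : 0 < c' := by positivity
  have hZinv : Z⁻¹ ≤ c := by
    rw [← inv_inv c]
    apply inv_anti₀ (by positivity)
    calc c⁻¹ = Ct⁻¹ * Real.exp (-(gammaNorm Γ y ^ 2 + nL2)) := by
          rw [hcdef, mul_inv, ← Real.exp_neg]
      _ ≤ Z := hZlb
  have hZ'inv : Z'⁻¹ ≤ c' := by
    rw [← inv_inv c']
    apply inv_anti₀ (by positivity)
    calc c'⁻¹ = Ct⁻¹ * Real.exp (-(gammaNorm Γ y ^ 2 + nL2')) := by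
          rw [hc'def, mul_inv, ← Real.exp_neg]
      _ ≤ Z' := hZlb'
  -- the difference function g
  set g : X → ℝ := fun u => gammaNorm Γ (L' u - L u) with hgdef
  have hg_nonneg : ∀ u, 0 ≤ g u := fun u => gammaNorm_nonneg _ _
  have hg_meas : Measurable g :=
    (gammaNorm_continuous Γ).measurable.comp (hL'.sub hL)
  have hg_int : Integrable g μp := by
    refine Integrable.mono'
      (((integrable_const (1 : ℝ)).add (hIL'.const_mul 2)).add (hIL.const_mul 2))
      hg_meas.aestronglyMeasurable (Filter.Eventually.of_forall fun u => ?_)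
    rw [Real.norm_eq_abs, abs_of_nonneg (hg_nonneg u)]
    have h1 := gammaNorm_sub_sq_le hΓ (L' u) (L u)
    have h0 := hg_nonneg u
    simp only [hgdef, Pi.add_apply]
    nlinarith
  set I : ℝ := ∫ u, g u ∂μp with hIdef
  have hI_nonneg : 0 ≤ I := integral_nonneg hg_nonneg
  -- bound on |Z' - Z|
  have hlip : ∀ u, |ρ (y - L' u) - ρ (y - L u)| ≤ Lρ * g u := by
    intro u
    have := hρ.lip (y - L' u) (y - L u)
    have heq : (y - L' u) - (y - L u) = L u - L' u := by abel
    rw [heq, gammaNorm_sub_rev] at this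
    exact this
  have hZdiff : |Z' - Z| ≤ Lρ * I := by
    have hsub : Z' - Z = ∫ u, (ρ (y - L' u) - ρ (y - L u)) ∂μp := by
      rw [integral_sub hintρ' hintρ]
      rfl
    rw [hsub]
    calc |∫ u, (ρ (y - L' u) - ρ (y - L u)) ∂μp|
        ≤ ∫ u, |ρ (y - L' u) - ρ (y - L u)| ∂μp := by
          simpa [Real.norm_eq_abs] using
            norm_integral_le_integral_norm (fun u => ρ (y - L' u) - ρ (y - L u)) (μ := μp)
      _ ≤ ∫ u, Lρ * g u ∂μp := by
          refine integral_mono ((hintρ'.sub hintρ).abs) (hg_int.const_mul Lρ) fun u => hlip u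
      _ = Lρ * I := by rw [integral_const_mul]
  -- pointwise bound
  set a : ℝ := Lρ * c' with hadef
  set b : ℝ := Cb * (Lρ * I) * (c * c') with hbdef
  have ha_nonneg : 0 ≤ a := by positivity
  have hb_nonneg : 0 ≤ b := by positivity
  have key : ∀ u, |ρ (y - L' u) / Z' - ρ (y - L u) / Z| ≤ a * g u + b := by
    intro u
    have hid : ρ (y - L' u) / Z' - ρ (y - L u) / Z
        = (ρ (y - L' u) - ρ (y - L u)) / Z' + ρ (y - L u) * (Z - Z') / (Z * Z') := by
      field_simp
      ring
    rw [hid]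
    refine (abs_add_le _ _).trans ?_
    have e1 : |(ρ (y - L' u) - ρ (y - L u)) / Z'| ≤ a * g u := by
      rw [abs_div, abs_of_pos hZ'pos, div_eq_mul_inv]
      calc |ρ (y - L' u) - ρ (y - L u)| * Z'⁻¹ ≤ (Lρ * g u) * c' := by
            apply mul_le_mul (hlip u) hZ'inv (inv_nonneg.2 hZ'pos.le)
              (mul_nonneg hLρ.le (hg_nonneg u))
        _ = a * g u := by rw [hadef]; ring
    have e2 : |ρ (y - L u) * (Z - Z') / (Z * Z')| ≤ b := by
      rw [abs_div, abs_of_pos (mul_pos hZpos hZ'pos), div_eq_mul_inv, abs_mul,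
        abs_of_pos (hρ.pos _), mul_inv]
      have hZZ : |Z - Z'| ≤ Lρ * I := by rw [abs_sub_comm]; exact hZdiff
      calc ρ (y - L u) * |Z - Z'| * (Z⁻¹ * Z'⁻¹)
          ≤ Cb * (Lρ * I) * (c * c') := by
            apply mul_le_mul
            · exact mul_le_mul (hρ.bdd _) hZZ (abs_nonneg _) hCb.le
            · exact mul_le_mul hZinv hZ'inv (by positivity) hcpos.le
            · positivity
            · positivity
        _ = b := hbdef.symm
    linarith
  -- eLpNorm assembly
  have hp0 : p ≠ 0 := by
    intro h
    rw [h] at hp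
    exact absurd hp (by simp)
  have hf_meas : Measurable fun u => ρ (y - L' u) / Z' - ρ (y - L u) / Z :=
    ((hρc.measurable.comp (measurable_const.sub hL')).div_const Z').sub
      ((hρc.measurable.comp (measurable_const.sub hL)).div_const Z)
  have step1 : eLpNorm (fun u => ρ (y - L' u) / Z' - ρ (y - L u) / Z) p μp
      ≤ eLpNorm (fun u => a * g u + b) p μp :=
    eLpNorm_mono_real fun u => by rw [Real.norm_eq_abs]; exact key u
  have step2 : eLpNorm (fun u => a * g u + b) p μp
      ≤ eLpNorm (fun u => a * g u) p μp + eLpNorm (fun _ : X => b) p μp :=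
    eLpNorm_add_le ((hg_meas.const_mul a).aestronglyMeasurable)
      aestronglyMeasurable_const hp
  have step3 : eLpNorm (fun u => a * g u) p μp = ENNReal.ofReal a * eLpNorm g p μp := by
    have := eLpNorm_const_smul (a : ℝ) g p μp
    rw [show (fun u => a * g u) = a • g from rfl, this]
    congr 1
    rw [← Real.enorm_eq_ofReal ha_nonneg]
  have step4 : eLpNorm (fun _ : X => b) p μp = ENNReal.ofReal b := by
    rw [eLpNorm_const b hp0 (IsProbabilityMeasure.ne_zero μp)]
    simp [Real.enorm_eq_ofReal hb_nonneg]
  have hI_le : ENNReal.ofReal I ≤ eLpNorm g p μp := by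
    have h1 : ENNReal.ofReal I = ∫⁻ u, ENNReal.ofReal (g u) ∂μp :=
      ofReal_integral_eq_lintegral_ofReal hg_int (Filter.Eventually.of_forall hg_nonneg)
    have h2 : eLpNorm g 1 μp = ∫⁻ u, ENNReal.ofReal (g u) ∂μp := by
      rw [eLpNorm_one_eq_lintegral_enorm]
      refine lintegral_congr fun u => ?_
      rw [← Real.enorm_eq_ofReal (hg_nonneg u)]
    rw [h1, ← h2]
    exact eLpNorm_le_eLpNorm_of_exponent_le hp hg_meas.aestronglyMeasurable
  have step5 : ENNReal.ofReal b ≤ ENNReal.ofReal (Cb * Lρ * (c * c')) * eLpNorm g p μp := by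
    have : ENNReal.ofReal b = ENNReal.ofReal (Cb * Lρ * (c * c')) * ENNReal.ofReal I := by
      rw [← ENNReal.ofReal_mul (by positivity)]
      congr 1
      rw [hbdef]; ring
    rw [this]
    exact mul_le_mul_right hI_le _
  -- final real-number inequality
  set E : ℝ := Real.exp (2 * (gammaNorm Γ y) ^ 2 + nL2' + nL2) with hEdef
  have hreal : a + Cb * Lρ * (c * c') ≤ (Lρ * Ct + Cb * Lρ * Ct ^ 2) * E := by
    have hcc' : c * c' = Ct ^ 2 * E := by
      rw [hcdef, hc'def, hEdef]
      rw [show Ct * Real.exp (gammaNorm Γ y ^ 2 + nL2) * (Ct * Real.exp (gammaNorm Γ y ^ 2 + nL2'))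
          = Ct ^ 2 * (Real.exp (gammaNorm Γ y ^ 2 + nL2) * Real.exp (gammaNorm Γ y ^ 2 + nL2'))
          from by ring, ← Real.exp_add]
      congr 2
      ring
    have hc'E : c' ≤ Ct * E := by
      rw [hc'def, hEdef]
      apply mul_le_mul_of_nonneg_left _ hCt.le
      apply Real.exp_le_exp.2
      nlinarith
    have hE_pos : 0 < E := Real.exp_pos _
    calc a + Cb * Lρ * (c * c') = Lρ * c' + Cb * Lρ * (c * c') := by rw [hadef]
      _ ≤ Lρ * (Ct * E) + Cb * Lρ * (Ct ^ 2 * E) := by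
          apply add_le_add
          · exact mul_le_mul_of_nonneg_left hc'E hLρ.le
          · rw [hcc']
      _ = (Lρ * Ct + Cb * Lρ * Ct ^ 2) * E := by ring
  calc eLpNorm (fun u => ρ (y - L' u) / Z' - ρ (y - L u) / Z) p μp
      ≤ eLpNorm (fun u => a * g u + b) p μp := step1
    _ ≤ eLpNorm (fun u => a * g u) p μp + eLpNorm (fun _ : X => b) p μp := step2
    _ = ENNReal.ofReal a * eLpNorm g p μp + ENNReal.ofReal b := by rw [step3, step4]
    _ ≤ ENNReal.ofReal a * eLpNorm g p μp
        + ENNReal.ofReal (Cb * Lρ * (c * c')) * eLpNorm g p μp := by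
          exact add_le_add le_rfl step5
    _ = (ENNReal.ofReal a + ENNReal.ofReal (Cb * Lρ * (c * c'))) * eLpNorm g p μp := by
          rw [add_mul]
    _ ≤ ENNReal.ofReal ((Lρ * Ct + Cb * Lρ * Ct ^ 2) * E) * eLpNorm g p μp := by
          apply mul_le_mul_left
          rw [← ENNReal.ofReal_add ha_nonneg (by positivity)]
          exact ENNReal.ofReal_le_ofReal hreal
    _ = ENNReal.ofReal ((Lρ * Ct + Cb * Lρ * Ct ^ 2)
          * Real.exp (2 * (gammaNorm Γ y) ^ 2 + nL2' + nL2)) * eLpNorm g p μp := by rw [hEdef]
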